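/- Let W₁,…,Wₙ be i.i.d. χ²(1) random variables. There exist universal constants C, C' > 0 such that for all n ≥ C, E[(med(W₁,…,Wₙ))^{-2}] ≤ C'. -/

import Mathlib

open MeasureTheory ProbabilityTheory
open scoped ENNReal NNReal

/-- Sample median of `n` reals (the `⌊n/2⌋`-th order statistic, 0-indexed). -/
noncomputable def sampleMedian {n : ℕ} (hn : 0 < n) (v : Fin n → ℝ) : ℝ :=
  v (Tuple.sort v ⟨n / 2, Nat.div_lt_self hn one_lt_two⟩)

/-- The chi-squared distribution with one degree of freedom, as the law of `W²`, `W ~ N(0,1)`. -/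
noncomputable def chiSq1 : Measure ℝ := (gaussianReal 0 1).map fun x => x ^ 2

lemma chiSq1_Iic_le {x : ℝ} (hx : 0 ≤ x) :
    chiSq1 (Set.Iic x) ≤ ENNReal.ofReal (Real.sqrt x) := by
  have hmeas : Measurable fun y : ℝ => y ^ 2 := measurable_id.pow_const 2
  rw [chiSq1, Measure.map_apply hmeas measurableSet_Iic]
  have hpre : (fun y : ℝ => y ^ 2) ⁻¹' Set.Iic x
      = Set.Icc (-Real.sqrt x) (Real.sqrt x) := by
    ext y
    simp only [Set.mem_preimage, Set.mem_Iic, Set.mem_Icc, ← abs_le]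
    constructor
    · exact fun h => Real.abs_le_sqrt h
    · intro h
      calc y ^ 2 = |y| ^ 2 := (sq_abs y).symm
        _ ≤ Real.sqrt x ^ 2 := by exact pow_le_pow_left₀ (abs_nonneg y) h 2
        _ = x := Real.sq_sqrt hx
  have hpdf : ∀ y : ℝ, gaussianPDF 0 1 y ≤ (2 : ℝ≥0∞)⁻¹ := by
    intro y
    have hsq : (2:ℝ) ≤ Real.sqrt (2 * Real.pi) := by
      have h4 : (4:ℝ) ≤ 2 * Real.pi := by nlinarith [Real.pi_gt_three]
      nlinarith [Real.sq_sqrt (by positivity : (0:ℝ) ≤ 2 * Real.pi),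
        Real.sqrt_nonneg (2 * Real.pi)]
    have h1 : gaussianPDFReal 0 1 y ≤ 2⁻¹ := by
      rw [gaussianPDFReal]
      have he : Real.exp (-(y - 0) ^ 2 / (2 * ((1:ℝ≥0):ℝ))) ≤ 1 := by
        rw [Real.exp_le_one_iff]
        have : (0:ℝ) ≤ (y - 0)^2 := sq_nonneg _
        simp only [NNReal.coe_one]
        nlinarith
      have hs : (Real.sqrt (2 * Real.pi * ((1:ℝ≥0):ℝ)))⁻¹ ≤ 2⁻¹ := by
        simp only [NNReal.coe_one, mul_one]
        exact inv_anti₀ (by norm_num) hsq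
      calc (Real.sqrt (2 * Real.pi * ((1:ℝ≥0):ℝ)))⁻¹ * Real.exp (-(y - 0) ^ 2 / (2 * ((1:ℝ≥0):ℝ)))
          ≤ (Real.sqrt (2 * Real.pi * ((1:ℝ≥0):ℝ)))⁻¹ * 1 := by
            exact mul_le_mul_of_nonneg_left he (by positivity)
        _ ≤ 2⁻¹ := by rw [mul_one]; exact hs
    rw [gaussianPDF]
    calc ENNReal.ofReal (gaussianPDFReal 0 1 y) ≤ ENNReal.ofReal (2⁻¹ : ℝ) :=
          ENNReal.ofReal_le_ofReal h1
      _ = (2:ℝ≥0∞)⁻¹ := by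
          rw [ENNReal.ofReal_inv_of_pos (by norm_num)]
          norm_num
  rw [hpre, gaussianReal_apply 0 one_ne_zero]
  calc ∫⁻ y in Set.Icc (-Real.sqrt x) (Real.sqrt x), gaussianPDF 0 1 y
      ≤ ∫⁻ _ in Set.Icc (-Real.sqrt x) (Real.sqrt x), (2:ℝ≥0∞)⁻¹ :=
        lintegral_mono fun y => hpdf y
    _ = (2:ℝ≥0∞)⁻¹ * volume (Set.Icc (-Real.sqrt x) (Real.sqrt x)) := by
        rw [setLIntegral_const]
    _ = (2:ℝ≥0∞)⁻¹ * ENNReal.ofReal (Real.sqrt x - -Real.sqrt x) := by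
        rw [Real.volume_Icc]
    _ = ENNReal.ofReal (Real.sqrt x) := by
        rw [show Real.sqrt x - -Real.sqrt x = 2 * Real.sqrt x by ring,
          ENNReal.ofReal_mul (by norm_num), ENNReal.ofReal_ofNat, ← mul_assoc,
          ENNReal.inv_mul_cancel two_ne_zero ENNReal.ofNat_ne_top, one_mul]

lemma sampleMedian_le_iff {n : ℕ} (hn : 0 < n) (v : Fin n → ℝ) (x : ℝ) :
    sampleMedian hn v ≤ x ↔
      n / 2 + 1 ≤ (Finset.univ.filter fun i => v i ≤ x).card := by
  set m : Fin n := ⟨n / 2, Nat.div_lt_self hn one_lt_two⟩ with hm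
  set σ := Tuple.sort v with hσ
  have hmono : Monotone (v ∘ σ) := Tuple.monotone_sort v
  have hmed : sampleMedian hn v = v (σ m) := rfl
  rw [hmed]
  constructor
  · intro h
    have hsub : (Finset.Iic m).image σ ⊆ Finset.univ.filter fun i => v i ≤ x := by
      intro i hi
      simp only [Finset.mem_image, Finset.mem_Iic] at hi
      obtain ⟨j, hj, rfl⟩ := hi
      simp only [Finset.mem_filter, Finset.mem_univ, true_and]
      exact le_trans (hmono hj) h
    calc n / 2 + 1 = (m : ℕ) + 1 := rfl
      _ = (Finset.Iic m).card := (Fin.card_Iic m).symm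
      _ = ((Finset.Iic m).image σ).card :=
          (Finset.card_image_of_injective _ σ.injective).symm
      _ ≤ _ := Finset.card_le_card hsub
  · intro h
    by_contra hx
    push_neg at hx
    have hsub : (Finset.univ.filter fun i => v i ≤ x) ⊆ (Finset.Iio m).image σ := by
      intro i hi
      simp only [Finset.mem_filter, Finset.mem_univ, true_and] at hi
      refine Finset.mem_image.2 ⟨σ.symm i, ?_, σ.apply_symm_apply i⟩
      rw [Finset.mem_Iio]
      by_contra hj
      push_neg at hj
      have : v (σ m) ≤ v (σ (σ.symm i)) := hmono hj
      rw [σ.apply_symm_apply] at this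
      exact absurd (this.trans hi) (not_le.2 hx)
    have hle := Finset.card_le_card hsub
    rw [Finset.card_image_of_injective _ σ.injective, Fin.card_Iio] at hle
    have : (m : ℕ) = n / 2 := rfl
    omega

lemma measurable_sampleMedian {n : ℕ} (hn : 0 < n) {Ω : Type}
    [MeasurableSpace Ω] (W : Fin n → Ω → ℝ) (hW : ∀ i, Measurable (W i)) :
    Measurable fun ω => sampleMedian hn fun i => W i ω := by
  apply measurable_of_Iic
  intro x
  have hset : (fun ω => sampleMedian hn fun i => W i ω) ⁻¹' Set.Iic x
      = (fun ω => (Finset.univ.filter fun i => W i ω ≤ x).card) ⁻¹' Set.Ici (n / 2 + 1) := by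
    ext ω
    simp only [Set.mem_preimage, Set.mem_Iic, Set.mem_Ici]
    exact sampleMedian_le_iff hn _ x
  rw [hset]
  have hc : Measurable fun ω => (Finset.univ.filter fun i => W i ω ≤ x).card := by
    simp only [Finset.card_filter]
    apply Finset.measurable_sum
    intro i _
    exact Measurable.ite (measurableSet_le (hW i) measurable_const)
      measurable_const measurable_const
  exact hc (by trivial)

lemma count_bound {n : ℕ} {Ω : Type} [MeasurableSpace Ω] (μ : Measure Ω)
    [IsProbabilityMeasure μ] (W : Fin n → Ω → ℝ)
    (hind : iIndepFun W μ)
    (hW : ∀ i, Measurable (W i)) (hmap : ∀ i, μ.map (W i) = chiSq1)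
    {x : ℝ} (hx : 0 ≤ x) (k : ℕ) :
    μ {ω | k ≤ (Finset.univ.filter fun i => W i ω ≤ x).card}
      ≤ 2 ^ n * ENNReal.ofReal (Real.sqrt x) ^ k := by
  have hone : ∀ i, μ (W i ⁻¹' Set.Iic x) ≤ ENNReal.ofReal (Real.sqrt x) := by
    intro i
    rw [← Measure.map_apply (hW i) measurableSet_Iic, hmap i]
    exact chiSq1_Iic_le hx
  set 𝒮 : Finset (Finset (Fin n)) :=
    Finset.univ.filter fun s : Finset (Fin n) => s.card = k with h𝒮
  have hsub : {ω | k ≤ (Finset.univ.filter fun i => W i ω ≤ x).card}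
      ⊆ ⋃ s ∈ 𝒮, ⋂ i ∈ s, W i ⁻¹' Set.Iic x := by
    intro ω hω
    obtain ⟨s, hs_sub, hs_card⟩ := Finset.exists_subset_card_eq hω
    have hsmem : s ∈ 𝒮 := by simp [h𝒮, hs_card]
    refine Set.mem_biUnion hsmem ?_
    refine Set.mem_iInter₂.2 fun i hi => ?_
    have := hs_sub hi
    simp only [Finset.mem_filter, Finset.mem_univ, true_and] at this
    exact this
  refine (measure_mono hsub).trans ?_
  refine (measure_biUnion_finset_le _ _).trans ?_
  have hterm : ∀ s ∈ 𝒮,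
      μ (⋂ i ∈ s, W i ⁻¹' Set.Iic x) ≤ ENNReal.ofReal (Real.sqrt x) ^ k := by
    intro s hs
    have hscard : s.card = k := by simpa [h𝒮] using hs
    rw [hind.measure_inter_preimage_eq_mul s (sets := fun _ => Set.Iic x)
      (fun i _ => measurableSet_Iic)]
    calc ∏ i ∈ s, μ (W i ⁻¹' Set.Iic x)
        ≤ ∏ _i ∈ s, ENNReal.ofReal (Real.sqrt x) :=
          Finset.prod_le_prod' fun i _ => hone i
      _ = _ := by rw [Finset.prod_const, hscard]
  calc ∑ s ∈ 𝒮, μ (⋂ i ∈ s, W i ⁻¹' Set.Iic x)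
      ≤ ∑ _s ∈ 𝒮, ENNReal.ofReal (Real.sqrt x) ^ k := Finset.sum_le_sum hterm
    _ = (𝒮.card : ℝ≥0∞) * ENNReal.ofReal (Real.sqrt x) ^ k := by
        rw [Finset.sum_const, nsmul_eq_mul]
    _ ≤ 2 ^ n * ENNReal.ofReal (Real.sqrt x) ^ k := by
        refine mul_le_mul_left ?_ _
        have h1 : 𝒮.card ≤ 2 ^ n := by
          calc 𝒮.card ≤ (Finset.univ : Finset (Finset (Fin n))).card :=
              Finset.card_filter_le _ _
            _ = 2 ^ n := by rw [Finset.card_univ, Fintype.card_finset, Fintype.card_fin]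
        calc (𝒮.card : ℝ≥0∞) ≤ ((2 ^ n : ℕ) : ℝ≥0∞) := Nat.cast_le.2 h1
          _ = 2 ^ n := by push_cast; ring

lemma two_pow_cancel (m : ℕ) : (2:ℝ≥0∞) ^ m * ((2:ℝ≥0∞)⁻¹) ^ m = 1 := by
  rw [← mul_pow, ENNReal.mul_inv_cancel two_ne_zero ENNReal.ofNat_ne_top, one_pow]

/-- There are universal constants `C, C' > 0` such that for all `n ≥ C`,
if `W₁, …, Wₙ` are i.i.d. `χ²(1)` random variables then
`E[(med(W₁, …, Wₙ))⁻²] ≤ C'`. -/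
theorem statement9 :
    ∃ (C : ℕ) (C' : ℝ), 0 < C ∧ 0 < C' ∧ ∀ n : ℕ, C ≤ n → ∀ (hn : 0 < n)
      (Ω : Type) [MeasurableSpace Ω] (μ : Measure Ω) [IsProbabilityMeasure μ]
      (W : Fin n → Ω → ℝ),
      iIndepFun W μ →
      (∀ i, Measurable (W i)) →
      (∀ i, μ.map (W i) = chiSq1) →
      (∫ ω, ((sampleMedian hn fun i => W i ω)⁻¹) ^ 2 ∂μ) ≤ C' := by
  refine ⟨14, 2 ^ 24, by norm_num, by norm_num, ?_⟩
  intro n hn14 hn Ω _ μ _ W hind hW hmap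
  set k : ℕ := n / 2 + 1 with hk
  have hk8 : 8 ≤ k := by omega
  have hk2n : 2 * n ≤ 4 * k := by omega
  set med : Ω → ℝ := fun ω => sampleMedian hn fun i => W i ω with hmeddef
  have hmeas : Measurable med := measurable_sampleMedian hn W hW
  set A : ℕ → Set Ω := fun j => {ω | med ω ≤ (4:ℝ)⁻¹ ^ (j + 4)} with hA
  have hAmeas : ∀ j, MeasurableSet (A j) := fun j => hmeas measurableSet_Iic
  have hAbound : ∀ j, μ (A j) ≤ ((2:ℝ≥0∞)⁻¹) ^ (8 * j) := by
    intro j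
    have hxnn : (0:ℝ) ≤ (4:ℝ)⁻¹ ^ (j + 4) := by positivity
    have hAeq : A j = {ω | k ≤ (Finset.univ.filter fun i =>
        W i ω ≤ (4:ℝ)⁻¹ ^ (j + 4)).card} := by
      ext ω
      simp only [hA, Set.mem_setOf_eq]
      exact sampleMedian_le_iff hn _ _
    have hsqrt : Real.sqrt ((4:ℝ)⁻¹ ^ (j + 4)) = (2:ℝ)⁻¹ ^ (j + 4) := by
      rw [show (4:ℝ)⁻¹ = ((2:ℝ)⁻¹) ^ 2 by norm_num, ← pow_mul, mul_comm 2 (j + 4),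
        pow_mul]
      exact Real.sqrt_sq (by positivity)
    have h1 : μ (A j) ≤ 2 ^ n * ENNReal.ofReal ((2:ℝ)⁻¹ ^ (j + 4)) ^ k := by
      rw [hAeq]
      have := count_bound μ W hind hW hmap hxnn k
      rwa [hsqrt] at this
    have h2 : ENNReal.ofReal ((2:ℝ)⁻¹ ^ (j + 4)) = ((2:ℝ≥0∞)⁻¹) ^ (j + 4) := by
      rw [ENNReal.ofReal_pow (by norm_num)]
      congr 1
      rw [ENNReal.ofReal_inv_of_pos (by norm_num)]
      norm_num
    rw [h2, ← pow_mul] at h1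
    refine h1.trans ?_
    have hle : 8 * j + n ≤ (j + 4) * k := by nlinarith
    obtain ⟨r, hr⟩ := Nat.exists_eq_add_of_le hle
    rw [hr]
    have hr1 : ((2:ℝ≥0∞)⁻¹) ^ r ≤ 1 :=
      pow_le_one' (ENNReal.inv_le_one.mpr one_le_two) r
    calc (2:ℝ≥0∞) ^ n * ((2:ℝ≥0∞)⁻¹) ^ (8 * j + n + r)
        = (2:ℝ≥0∞)⁻¹ ^ (8 * j) * ((2:ℝ≥0∞) ^ n * (2:ℝ≥0∞)⁻¹ ^ n) * (2:ℝ≥0∞)⁻¹ ^ r := by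
          rw [pow_add, pow_add]; ring
      _ = (2:ℝ≥0∞)⁻¹ ^ (8 * j) * (2:ℝ≥0∞)⁻¹ ^ r := by rw [two_pow_cancel, mul_one]
      _ ≤ (2:ℝ≥0∞)⁻¹ ^ (8 * j) * 1 := mul_le_mul_right hr1 _
      _ = (2:ℝ≥0∞)⁻¹ ^ (8 * j) := mul_one _
  set F : ℕ → Ω → ℝ≥0∞ :=
    fun j => (A j).indicator fun _ => (16:ℝ≥0∞) ^ (j + 5) with hF
  have hpoint : ∀ ω, ENNReal.ofReal ((med ω)⁻¹ ^ 2)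
      ≤ (16:ℝ≥0∞) ^ 4 + ∑' j, F j ω := by
    intro ω
    set X : ℝ := (med ω)⁻¹ ^ 2 with hX
    by_cases hXle : X ≤ 16 ^ 4
    · calc ENNReal.ofReal X ≤ ENNReal.ofReal ((16:ℝ) ^ 4) := ENNReal.ofReal_le_ofReal hXle
        _ = (16:ℝ≥0∞) ^ 4 := by
            rw [ENNReal.ofReal_pow (by norm_num), ENNReal.ofReal_ofNat]
        _ ≤ _ := le_self_add
    · push_neg at hXle
      have hex : ∃ j, X ≤ 16 ^ (j + 5) := by
        obtain ⟨j, hj⟩ := pow_unbounded_of_one_lt X (by norm_num : (1:ℝ) < 16)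
        exact ⟨j, hj.le.trans (pow_le_pow_right₀ (by norm_num) (by omega))⟩
      set J := Nat.find hex with hJ
      have hJle : X ≤ 16 ^ (J + 5) := Nat.find_spec hex
      have hJgt : (16:ℝ) ^ (J + 4) < X := by
        rcases Nat.eq_zero_or_pos J with h0 | hpos
        · rw [h0]; simpa using hXle
        · have := Nat.find_min hex (Nat.sub_lt hpos one_pos)
          push_neg at this
          have heq : J - 1 + 5 = J + 4 := by omega
          rwa [heq] at this
      have hmem : ω ∈ A J := by
        show med ω ≤ (4:ℝ)⁻¹ ^ (J + 4)
        rcases le_or_gt (med ω) 0 with h | h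
        · exact h.trans (by positivity)
        · by_contra hcon
          push_neg at hcon
          have hb : (0:ℝ) < (4:ℝ)⁻¹ ^ (J + 4) := by positivity
          have hsq : ((4:ℝ)⁻¹ ^ (J + 4)) ^ 2 < med ω ^ 2 :=
            pow_lt_pow_left₀ hcon hb.le (by norm_num)
          have h16 : ((4:ℝ)⁻¹ ^ (J + 4)) ^ 2 = (16:ℝ)⁻¹ ^ (J + 4) := by
            rw [← pow_mul, mul_comm (J + 4) 2, pow_mul]; norm_num
          have hXeq : X = (med ω ^ 2)⁻¹ := by rw [hX, ← inv_pow]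
          have hlt : X < (16:ℝ) ^ (J + 4) := by
            rw [hXeq]
            calc (med ω ^ 2)⁻¹ < (((4:ℝ)⁻¹ ^ (J + 4)) ^ 2)⁻¹ :=
                inv_strictAnti₀ (by positivity) hsq
              _ = (16:ℝ) ^ (J + 4) := by rw [h16, inv_pow, inv_inv]
          exact absurd hJgt (not_lt.2 hlt.le)
      calc ENNReal.ofReal X ≤ ENNReal.ofReal ((16:ℝ) ^ (J + 5)) :=
            ENNReal.ofReal_le_ofReal hJle
        _ = (16:ℝ≥0∞) ^ (J + 5) := by
            rw [ENNReal.ofReal_pow (by norm_num), ENNReal.ofReal_ofNat]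
        _ = F J ω := by rw [hF]; simp [Set.indicator_of_mem hmem]
        _ ≤ ∑' j, F j ω := ENNReal.le_tsum J
        _ ≤ _ := le_add_self
  have hFmeas : ∀ j, Measurable (F j) :=
    fun j => measurable_const.indicator (hAmeas j)
  have hlint : ∫⁻ ω, ENNReal.ofReal ((med ω)⁻¹ ^ 2) ∂μ ≤ (2:ℝ≥0∞) ^ 24 := by
    calc ∫⁻ ω, ENNReal.ofReal ((med ω)⁻¹ ^ 2) ∂μ
        ≤ ∫⁻ ω, ((16:ℝ≥0∞) ^ 4 + ∑' j, F j ω) ∂μ := lintegral_mono hpoint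
      _ = (16:ℝ≥0∞) ^ 4 + ∫⁻ ω, ∑' j, F j ω ∂μ := by
          rw [lintegral_add_left measurable_const, lintegral_const,
            measure_univ, mul_one]
      _ = (16:ℝ≥0∞) ^ 4 + ∑' j, ∫⁻ ω, F j ω ∂μ := by
          rw [lintegral_tsum fun j => (hFmeas j).aemeasurable]
      _ = (16:ℝ≥0∞) ^ 4 + ∑' j, (16:ℝ≥0∞) ^ (j + 5) * μ (A j) := by
          congr 1
          exact tsum_congr fun j => lintegral_indicator_const (hAmeas j) _
      _ ≤ (16:ℝ≥0∞) ^ 4 + ∑' j, (16:ℝ≥0∞) ^ 5 * ((2:ℝ≥0∞)⁻¹) ^ j := by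
          refine add_le_add_right (ENNReal.tsum_le_tsum fun j => ?_) _
          calc (16:ℝ≥0∞) ^ (j + 5) * μ (A j)
              ≤ (16:ℝ≥0∞) ^ (j + 5) * ((2:ℝ≥0∞)⁻¹) ^ (8 * j) :=
                mul_le_mul_right (hAbound j) _
            _ = (16:ℝ≥0∞) ^ 5 * ((2:ℝ≥0∞) ^ (4 * j) * ((2:ℝ≥0∞)⁻¹) ^ (4 * j))
                  * ((2:ℝ≥0∞)⁻¹) ^ (4 * j) := by
                rw [show (16:ℝ≥0∞) = 2 ^ 4 by norm_num]
                rw [show 8 * j = 4 * j + 4 * j by ring, ← pow_mul, ← pow_mul, pow_add]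
                ring
            _ = (16:ℝ≥0∞) ^ 5 * ((2:ℝ≥0∞)⁻¹) ^ (4 * j) := by
                rw [two_pow_cancel, mul_one]
            _ ≤ (16:ℝ≥0∞) ^ 5 * ((2:ℝ≥0∞)⁻¹) ^ j :=
                mul_le_mul_right (pow_le_pow_of_le_one zero_le
                  (ENNReal.inv_le_one.mpr one_le_two) (by omega)) _
      _ = (16:ℝ≥0∞) ^ 4 + (16:ℝ≥0∞) ^ 5 * 2 := by
          rw [ENNReal.tsum_mul_left, ENNReal.tsum_geometric, ENNReal.one_sub_inv_two,
            inv_inv]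
      _ ≤ (2:ℝ≥0∞) ^ 24 := by
          have h1 : (16:ℝ≥0∞) ^ 4 + (16:ℝ≥0∞) ^ 5 * 2
              = ((16 ^ 4 + 16 ^ 5 * 2 : ℕ) : ℝ≥0∞) := by push_cast; ring
          have h2 : (2:ℝ≥0∞) ^ 24 = ((2 ^ 24 : ℕ) : ℝ≥0∞) := by push_cast; ring
          rw [h1, h2]
          exact Nat.cast_le.2 (by norm_num)
  have hnn : 0 ≤ᵐ[μ] fun ω => ((med ω)⁻¹) ^ 2 := ae_of_all _ fun ω => sq_nonneg _
  have hsm : AEStronglyMeasurable (fun ω => ((med ω)⁻¹) ^ 2) μ :=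
    ((hmeas.inv).pow_const 2).aestronglyMeasurable
  rw [integral_eq_lintegral_of_nonneg_ae hnn hsm]
  calc (∫⁻ ω, ENNReal.ofReal ((med ω)⁻¹ ^ 2) ∂μ).toReal
      ≤ ((2:ℝ≥0∞) ^ 24).toReal :=
        ENNReal.toReal_mono (by simp) hlint
    _ = 2 ^ 24 := by simp
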